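/- arXiv:0905.4166 — 2 statements merged into one kernel-verified Lean document; each statement's English description precedes it below -/
import Mathlib

section
/- Let E be a Hausdorff topological real vector space, and let X₁, X₂ ⊆ E be linear subspaces, each endowed with a norm making it a Banach space whose inclusion map into E is continuous. Let f : X₁ + X₂ → X₁ + X₂ be a map such that f(X₁) ⊆ X₁ and f(X₂) ⊆ X₂, and such that the restriction of f to X_i is a contraction for the norm of X_i (Lipschitz with constant k_i < 1), for i = 1,2. If z ∈ X₁ is a fixed point of f (f(z) = z), then z ∈ X₂. -/
open scoped NNReal

/-- If `X₁, X₂` are Banach spaces continuously and injectively included in a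
Hausdorff topological vector space `E`, `f : X₁ + X₂ → X₁ + X₂` restricts to a
contraction of each `X_i`, and `z ∈ X₁` is a fixed point of `f`, then `z ∈ X₂`. -/
theorem fixed_point_in_second_space
    {E X₁ X₂ : Type*}
    [AddCommGroup E] [Module ℝ E] [TopologicalSpace E]
    [IsTopologicalAddGroup E] [ContinuousSMul ℝ E] [T2Space E]
    [NormedAddCommGroup X₁] [NormedSpace ℝ X₁] [CompleteSpace X₁]
    [NormedAddCommGroup X₂] [NormedSpace ℝ X₂] [CompleteSpace X₂]
    (ι₁ : X₁ →L[ℝ] E) (ι₂ : X₂ →L[ℝ] E)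
    (hι₁ : Function.Injective ι₁) (hι₂ : Function.Injective ι₂)
    (f : E → E)
    (hf : Set.MapsTo f
      ((LinearMap.range (ι₁ : X₁ →ₗ[ℝ] E) ⊔ LinearMap.range (ι₂ : X₂ →ₗ[ℝ] E) : Submodule ℝ E) : Set E)
      ((LinearMap.range (ι₁ : X₁ →ₗ[ℝ] E) ⊔ LinearMap.range (ι₂ : X₂ →ₗ[ℝ] E) : Submodule ℝ E) : Set E))
    (f₁ : X₁ → X₁) (hf₁ : ∀ x : X₁, f (ι₁ x) = ι₁ (f₁ x))
    (f₂ : X₂ → X₂) (hf₂ : ∀ x : X₂, f (ι₂ x) = ι₂ (f₂ x))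
    (k₁ k₂ : ℝ≥0) (hk₁ : k₁ < 1) (hk₂ : k₂ < 1)
    (hL₁ : LipschitzWith k₁ f₁) (hL₂ : LipschitzWith k₂ f₂)
    (z : X₁) (hz : f₁ z = z) :
    ∃ w : X₂, ι₂ w = ι₁ z := by
  -- The "intersection" X₁ ∩ X₂ as a closed subset of X₁ × X₂
  set S : Set (X₁ × X₂) := {p | ι₁ p.1 = ι₂ p.2} with hS
  have hSclosed : IsClosed S :=
    isClosed_eq (ι₁.continuous.comp continuous_fst) (ι₂.continuous.comp continuous_snd)
  haveI : CompleteSpace S := hSclosed.completeSpace_coe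
  haveI : Nonempty S := ⟨⟨(0, 0), by simp [hS]⟩⟩
  -- f induces a map on S
  have hmem : ∀ p : S, ι₁ (f₁ (p : X₁ × X₂).1) = ι₂ (f₂ (p : X₁ × X₂).2) := by
    intro ⟨p, hp⟩
    have : f (ι₁ p.1) = f (ι₂ p.2) := by rw [hp]
    simpa [hf₁, hf₂] using this
  let g : S → S := fun p => ⟨(f₁ (p : X₁ × X₂).1, f₂ (p : X₁ × X₂).2), hmem p⟩
  have hLg : LipschitzWith (max k₁ k₂) g := by
    intro p q
    have h1 := hL₁ (p : X₁ × X₂).1 (q : X₁ × X₂).1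
    have h2 := hL₂ (p : X₁ × X₂).2 (q : X₁ × X₂).2
    have hd : edist (g p) (g q) =
        max (edist (f₁ (p : X₁ × X₂).1) (f₁ (q : X₁ × X₂).1))
          (edist (f₂ (p : X₁ × X₂).2) (f₂ (q : X₁ × X₂).2)) := rfl
    have hd' : edist p q = max (edist (p : X₁ × X₂).1 (q : X₁ × X₂).1)
        (edist (p : X₁ × X₂).2 (q : X₁ × X₂).2) := rfl
    rw [hd, hd']
    refine max_le ?_ ?_
    · exact h1.trans (mul_le_mul' (by exact_mod_cast le_max_left k₁ k₂) (le_max_left _ _))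
    · exact h2.trans (mul_le_mul' (by exact_mod_cast le_max_right k₁ k₂) (le_max_right _ _))
  have hCg : ContractingWith (max k₁ k₂) g := ⟨max_lt hk₁ hk₂, hLg⟩
  have hC₁ : ContractingWith k₁ f₁ := ⟨hk₁, hL₁⟩
  -- fixed point of g
  set u := hCg.fixedPoint g
  have hu : g u = u := hCg.fixedPoint_isFixedPt
  have hu1 : f₁ (u : X₁ × X₂).1 = (u : X₁ × X₂).1 := congrArg (fun p : S => (p : X₁ × X₂).1) hu
  -- uniqueness of the fixed point of f₁
  have h1 : (u : X₁ × X₂).1 = z := by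
    have ha := hC₁.fixedPoint_unique (x := (u : X₁ × X₂).1) hu1
    have hb := hC₁.fixedPoint_unique (x := z) hz
    rw [ha, hb]
  exact ⟨(u : X₁ × X₂).2, by rw [← u.2, h1]⟩
end

section
/- Let d ≥ 1, r > 0 and σ ∈ (0,1). There is a constant C > 0 depending only on d, r, σ such that for every bounded σ-Hölder function f : ℝ^d → ℝ (so that ‖f‖_{C^σ} < ∞), one has ‖f‖_{L^∞} ≤ C · N_r(f)^{σ/(r+σ)} · ‖f‖_{C^σ}^{r/(r+σ)}. -/
open MeasureTheory Real Filter
open scoped ENNReal NNReal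

noncomputable section

/-- `ℝ^d` as a Euclidean space. -/
abbrev Ed (d : ℕ) := EuclideanSpace ℝ (Fin d)

/-- The Gaussian heat kernel `g_t(x) = (4πt)^{-d/2} exp(-‖x‖²/(4t))` on `ℝ^d`. -/
def heatKernel (d : ℕ) (t : ℝ) (x : Ed d) : ℝ :=
  (4 * π * t) ^ (-(d : ℝ) / 2) * Real.exp (-‖x‖ ^ 2 / (4 * t))

/-- Convolution of the heat kernel with a vector field: `(e^{tΔ}f)(x)`. -/
def heatConv (d : ℕ) (t : ℝ) (f : Ed d → Fin d → ℝ) (x : Ed d) : Fin d → ℝ :=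
  ∫ y, heatKernel d t (x - y) • f y

/-- The Oseen kernel `O_t^{i,j,k}`, kernel of `e^{tΔ}ℙ∂_k` (entry `(i,j)` of the
Leray projection). -/
def oseenKernel (d : ℕ) (t : ℝ) (i j k : Fin d) (x : Ed d) : ℝ :=
  (∫ ξ : Ed d,
    (((if i = j then (1 : ℝ) else 0) : ℂ) - ((ξ i * ξ j : ℝ) : ℂ) / ((‖ξ‖ ^ 2 : ℝ) : ℂ)) *
      (2 * (π : ℂ) * Complex.I * ((ξ k : ℝ) : ℂ)) *
      Complex.exp ((-(4 * π ^ 2 * t * ‖ξ‖ ^ 2) : ℝ) : ℂ) *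
      Complex.exp (2 * (π : ℂ) * Complex.I * ((inner ℝ x ξ : ℝ) : ℂ))).re

/-- The heat-kernel (equivalent) norm `N_r` of the Besov space `B_∞^{-r,∞}`:
`N_r(f) = sup_{0<θ≤1} θ^{r/2} ‖g_θ∗f‖_∞`. -/
def besovNorm (d : ℕ) (r : ℝ) (f : Ed d → Fin d → ℝ) : ℝ≥0∞ :=
  ⨆ θ ∈ Set.Ioc (0 : ℝ) 1,
    ENNReal.ofReal (θ ^ (r / 2)) * eLpNorm (heatConv d θ f) ⊤ volume

/-- `u` is a mild solution of the Navier–Stokes equations on `(0,T)` with initial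
datum `u₀`: for a.e. `t ∈ (0,T)`,
`u_i(t) = g_t∗(u₀)_i − Σ_{j,k} ∫₀ᵗ O_{t−s}^{i,j,k} ∗ (u_k(s)u_j(s)) ds`,
the time integral converging absolutely. -/
structure IsMildSolution (d : ℕ) (T : ℝ) (u₀ : Ed d → Fin d → ℝ)
    (u : ℝ → Ed d → Fin d → ℝ) : Prop where
  meas : AEMeasurable (fun p : ℝ × Ed d => u p.1 p.2)
    (((volume : Measure ℝ).restrict (Set.Ioo 0 T)).prod volume)
  init_conv : ∀ t > (0 : ℝ), ∀ᵐ x ∂(volume : Measure (Ed d)),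
    Integrable (fun y => heatKernel d t (x - y) • u₀ y) volume
  duhamel : ∀ᵐ t ∂((volume : Measure ℝ).restrict (Set.Ioo 0 T)), ∀ i : Fin d,
    ∀ᵐ x ∂(volume : Measure (Ed d)),
      (∀ j k : Fin d, IntegrableOn
        (fun p : ℝ × Ed d =>
          oseenKernel d (t - p.1) i j k (x - p.2) * (u p.1 p.2 k * u p.1 p.2 j))
        (Set.Ioc 0 t ×ˢ Set.univ) (volume.prod volume)) ∧
      u t x i = (∫ y, heatKernel d t (x - y) * u₀ y i)
        - ∑ j, ∑ k, ∫ s in Set.Ioc (0 : ℝ) t, ∫ y,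
            oseenKernel d (t - s) i j k (x - y) * (u s y k * u s y j)

/-- Membership in `L^p([0,T], L^q(ℝ^d))` (`p = ∞` allowed). -/
def MemLpLq (d : ℕ) (T : ℝ) (p q : ℝ≥0∞) (u : ℝ → Ed d → Fin d → ℝ) : Prop :=
  (∀ᵐ t ∂((volume : Measure ℝ).restrict (Set.Ioo 0 T)), eLpNorm (u t) q volume < ⊤) ∧
  (if p = ⊤ then
      essSup (fun t => eLpNorm (u t) q volume) ((volume : Measure ℝ).restrict (Set.Ioo 0 T)) < ⊤
    else ∫⁻ t in Set.Ioo 0 T, eLpNorm (u t) q volume ^ p.toReal < ⊤)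

/-- The Besov path class `P_{r,T}`: for `r < 1` it is
`L^{2/(1-r)}([0,T], B_∞^{-r,∞})`; for `r = 1` it is `C([0,T], B_∞^{-1,∞})`. -/
def InPathClass (d : ℕ) (r T : ℝ) (u : ℝ → Ed d → Fin d → ℝ) : Prop :=
  if r = 1 then
    (∀ t₀ ∈ Set.Icc (0 : ℝ) T, ∀ ε > (0 : ℝ), ∃ δ > (0 : ℝ), ∀ t ∈ Set.Icc (0 : ℝ) T,
      |t - t₀| < δ →
        besovNorm d 1 (fun x => u t x - u t₀ x) < ENNReal.ofReal ε) ∧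
    (⨆ t ∈ Set.Icc (0 : ℝ) T, besovNorm d 1 (u t)) < ⊤
  else
    ∫⁻ t in Set.Ioo 0 T, besovNorm d r (u t) ^ (2 / (1 - r)) < ⊤

/-- The heat-kernel norm `N_r(f) = sup_{0<θ≤1} θ^{r/2} ‖g_θ∗f‖_∞` for a scalar
function `f`. -/
def besovNormS (d : ℕ) (r : ℝ) (f : Ed d → ℝ) : ℝ≥0∞ :=
  ⨆ θ ∈ Set.Ioc (0 : ℝ) 1,
    ENNReal.ofReal (θ ^ (r / 2)) *
      eLpNorm (fun x => ∫ y, heatKernel d θ (x - y) * f y) ⊤ volume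

/-- The norm of bounded `σ`-Hölder functions:
`‖f‖_{C^σ} = ‖f‖_∞ + sup_{x≠y} |f(x)−f(y)|/‖x−y‖^σ`. -/
def holderNormS (d : ℕ) (σ : ℝ) (f : Ed d → ℝ) : ℝ≥0∞ :=
  (⨆ x : Ed d, (‖f x‖₊ : ℝ≥0∞)) +
    ⨆ x : Ed d, ⨆ y : Ed d, ⨆ _ : x ≠ y,
      ENNReal.ofReal (|f x - f y| / ‖x - y‖ ^ σ)

lemma ed_gauss_integral (d : ℕ) {b : ℝ} (hb : 0 < b) :
    ∫ z : Ed d, Real.exp (-b * ‖z‖ ^ 2) = (π / b) ^ ((d : ℝ) / 2) := by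
  rw [GaussianFourier.integral_rexp_neg_mul_sq_norm hb]
  congr 1
  simp [finrank_euclideanSpace_fin]

lemma ed_gauss_integrable (d : ℕ) {b : ℝ} (hb : 0 < b) :
    Integrable (fun z : Ed d => Real.exp (-b * ‖z‖ ^ 2)) := by
  have h := (GaussianFourier.integrable_cexp_neg_mul_sq_norm_add (V := Ed d)
      (b := (b : ℂ)) (by simpa using hb) 0 (0 : Ed d)).norm
  refine h.congr (Filter.Eventually.of_forall fun z => ?_)
  simp [Complex.norm_exp, ← Complex.ofReal_pow]

lemma heatKernel_nonneg {d : ℕ} {θ : ℝ} (hθ : 0 < θ) (x : Ed d) : 0 ≤ heatKernel d θ x := by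
  unfold heatKernel
  have : (0:ℝ) < 4 * π * θ := by positivity
  positivity

lemma heatKernel_eq {d : ℕ} {θ : ℝ} (hθ : 0 < θ) (x : Ed d) :
    heatKernel d θ x = (4 * π * θ) ^ (-(d : ℝ) / 2) * Real.exp (-(1 / (4 * θ)) * ‖x‖ ^ 2) := by
  unfold heatKernel
  congr 1
  congr 1
  field_simp

lemma heatKernel_integrable {d : ℕ} {θ : ℝ} (hθ : 0 < θ) :
    Integrable (heatKernel d θ) := by
  have h := ((ed_gauss_integrable d (show (0:ℝ) < 1 / (4 * θ) by positivity)).const_mul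
    ((4 * π * θ) ^ (-(d : ℝ) / 2)))
  exact h.congr (Filter.Eventually.of_forall fun z => (heatKernel_eq hθ z).symm)

lemma heatKernel_integral {d : ℕ} {θ : ℝ} (hθ : 0 < θ) :
    ∫ z : Ed d, heatKernel d θ z = 1 := by
  have h4 : (0:ℝ) < 4 * π * θ := by positivity
  have hb : (0:ℝ) < 1 / (4 * θ) := by positivity
  calc ∫ z : Ed d, heatKernel d θ z
      = ∫ z : Ed d, (4 * π * θ) ^ (-(d : ℝ) / 2) * Real.exp (-(1 / (4 * θ)) * ‖z‖ ^ 2) := by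
        congr 1; funext z; exact heatKernel_eq hθ z
    _ = (4 * π * θ) ^ (-(d : ℝ) / 2) * ∫ z : Ed d, Real.exp (-(1 / (4 * θ)) * ‖z‖ ^ 2) :=
        integral_const_mul _ _
    _ = (4 * π * θ) ^ (-(d : ℝ) / 2) * (4 * π * θ) ^ ((d : ℝ) / 2) := by
        rw [ed_gauss_integral d hb]
        congr 2
        field_simp
    _ = 1 := by
        rw [← Real.rpow_add h4, neg_div, neg_add_cancel, Real.rpow_zero]

lemma heatKernel_mul_rpow_le {d : ℕ} {θ σ : ℝ} (hθ : 0 < θ) (hσ0 : 0 < σ) (hσ1 : σ < 1)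
    (z : Ed d) :
    heatKernel d θ z * ‖z‖ ^ σ ≤
      16 * θ ^ (σ / 2) * ((4 * π * θ) ^ (-(d : ℝ) / 2) * Real.exp (-(1 / (8 * θ)) * ‖z‖ ^ 2)) := by
  have h4 : (0:ℝ) < 4 * π * θ := by positivity
  set s := ‖z‖ with hs
  have hs0 : 0 ≤ s := norm_nonneg z
  have hsq : 0 < Real.sqrt θ := Real.sqrt_pos.2 hθ
  set u := s / Real.sqrt θ with hu
  have hu0 : 0 ≤ u := by positivity
  -- step 1 : u^σ ≤ 1 + u
  have h1 : u ^ σ ≤ 1 + u := by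
    rcases le_total u 1 with h | h
    · have := Real.rpow_le_one hu0 h hσ0.le
      linarith
    · have : u ^ σ ≤ u ^ (1:ℝ) := Real.rpow_le_rpow_of_exponent_le h hσ1.le
      rw [Real.rpow_one] at this
      linarith
  -- step 2 : 1 + u ≤ 16 * exp (u^2/8)
  have h2 : 1 + u ≤ 16 * Real.exp (u ^ 2 / 8) := by
    have he : u ^ 2 / 8 + 1 ≤ Real.exp (u ^ 2 / 8) := Real.add_one_le_exp _
    nlinarith [sq_nonneg (u - 1), sq_nonneg u]
  -- step 3 : s^σ = θ^{σ/2} * u^σ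
  have h3 : s ^ σ = θ ^ (σ / 2) * u ^ σ := by
    have hsu : s = Real.sqrt θ * u := by
      rw [hu, mul_div_assoc', mul_div_cancel_left₀ _ hsq.ne']
    rw [hsu, Real.mul_rpow hsq.le hu0]
    congr 1
    rw [Real.sqrt_eq_rpow, ← Real.rpow_mul hθ.le]
    congr 1
    ring
  -- step 4 : u^2 / 8 = s^2 / (8θ)
  have h4' : u ^ 2 / 8 = 1 / (8 * θ) * s ^ 2 := by
    rw [hu, div_pow, Real.sq_sqrt hθ.le]
    field_simp
  -- combine : s^σ ≤ 16 θ^{σ/2} exp(s²/(8θ))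
  have h5 : s ^ σ ≤ 16 * θ ^ (σ / 2) * Real.exp (1 / (8 * θ) * s ^ 2) := by
    have hθσ : 0 ≤ θ ^ (σ / 2) := Real.rpow_nonneg hθ.le _
    calc s ^ σ = θ ^ (σ / 2) * u ^ σ := h3
      _ ≤ θ ^ (σ / 2) * (16 * Real.exp (u ^ 2 / 8)) :=
          mul_le_mul_of_nonneg_left (h1.trans h2) hθσ
      _ = 16 * θ ^ (σ / 2) * Real.exp (1 / (8 * θ) * s ^ 2) := by
          rw [h4']; ring
  -- final
  rw [heatKernel_eq hθ z, ← hs]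
  have hkpos : (0:ℝ) ≤ (4 * π * θ) ^ (-(d : ℝ) / 2) := (Real.rpow_pos_of_pos h4 _).le
  calc (4 * π * θ) ^ (-(d : ℝ) / 2) * Real.exp (-(1 / (4 * θ)) * s ^ 2) * s ^ σ
      ≤ (4 * π * θ) ^ (-(d : ℝ) / 2) * Real.exp (-(1 / (4 * θ)) * s ^ 2) *
        (16 * θ ^ (σ / 2) * Real.exp (1 / (8 * θ) * s ^ 2)) := by
        apply mul_le_mul_of_nonneg_left h5
        positivity
    _ = 16 * θ ^ (σ / 2) * ((4 * π * θ) ^ (-(d : ℝ) / 2) *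
        (Real.exp (-(1 / (4 * θ)) * s ^ 2) * Real.exp (1 / (8 * θ) * s ^ 2))) := by ring
    _ = 16 * θ ^ (σ / 2) * ((4 * π * θ) ^ (-(d : ℝ) / 2) * Real.exp (-(1 / (8 * θ)) * s ^ 2)) := by
        rw [← Real.exp_add]
        congr 2
        field_simp
        ring

lemma conv_bound {d : ℕ} {θ M : ℝ} (hθ : 0 < θ) {f : Ed d → ℝ}
    (hbd : ∀ y, |f y| ≤ M) (x : Ed d) :
    |∫ y, heatKernel d θ (x - y) * f y| ≤ M := by
  have hki : Integrable (fun y : Ed d => heatKernel d θ (x - y)) :=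
    (heatKernel_integrable hθ).comp_sub_left x
  have hgi : Integrable (fun y : Ed d => M * heatKernel d θ (x - y)) := hki.const_mul M
  have hb : ∀ y, ‖heatKernel d θ (x - y) * f y‖ ≤ M * heatKernel d θ (x - y) := fun y => by
    rw [Real.norm_eq_abs, abs_mul, abs_of_nonneg (heatKernel_nonneg hθ _), mul_comm M]
    exact mul_le_mul_of_nonneg_left (hbd y) (heatKernel_nonneg hθ _)
  calc |∫ y, heatKernel d θ (x - y) * f y| ≤ ∫ y, M * heatKernel d θ (x - y) := by
        rw [← Real.norm_eq_abs]
        exact norm_integral_le_of_norm_le hgi (Filter.Eventually.of_forall hb)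
    _ = M * ∫ y, heatKernel d θ (x - y) := integral_const_mul _ _
    _ = M := by
        rw [integral_sub_left_eq_self (heatKernel d θ) volume x, heatKernel_integral hθ, mul_one]

lemma conv_error {d : ℕ} {θ σ L M : ℝ} (hθ : 0 < θ) (hσ0 : 0 < σ) (hσ1 : σ < 1) (hL : 0 ≤ L)
    {f : Ed d → ℝ} (hf : Continuous f) (hbd : ∀ y, |f y| ≤ M)
    (hHol : ∀ x y, |f x - f y| ≤ L * ‖x - y‖ ^ σ) (x : Ed d) :
    |f x - ∫ y, heatKernel d θ (x - y) * f y| ≤ L * (16 * 2 ^ ((d:ℝ)/2)) * θ ^ (σ / 2) := by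
  have h4 : (0:ℝ) < 4 * π * θ := by positivity
  have hki : Integrable (fun y : Ed d => heatKernel d θ (x - y)) :=
    (heatKernel_integrable hθ).comp_sub_left x
  have hfi : Integrable (fun y : Ed d => heatKernel d θ (x - y) * f y) := by
    have hh := Integrable.bdd_mul hki hf.aestronglyMeasurable
      (c := M) (Filter.Eventually.of_forall fun y => by rw [Real.norm_eq_abs]; exact hbd y)
    exact hh.congr (Filter.Eventually.of_forall fun y => mul_comm _ _)
  have hkx : ∫ y, heatKernel d θ (x - y) = 1 := by
    rw [integral_sub_left_eq_self (heatKernel d θ) volume x]; exact heatKernel_integral hθ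
  have key : f x - ∫ y, heatKernel d θ (x - y) * f y
      = ∫ y, heatKernel d θ (x - y) * (f x - f y) := by
    have h1 : ∫ y, heatKernel d θ (x - y) * f x = f x := by
      rw [integral_mul_const, hkx, one_mul]
    rw [eq_comm]
    calc ∫ y, heatKernel d θ (x - y) * (f x - f y)
        = ∫ y, (heatKernel d θ (x - y) * f x - heatKernel d θ (x - y) * f y) := by
          congr 1; funext y; ring
      _ = (∫ y, heatKernel d θ (x - y) * f x) - ∫ y, heatKernel d θ (x - y) * f y :=
          integral_sub (hki.mul_const (f x)) hfi
      _ = f x - ∫ y, heatKernel d θ (x - y) * f y := by rw [h1]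
  rw [key]
  set g : Ed d → ℝ := fun z => L * (16 * θ ^ (σ / 2) *
      ((4 * π * θ) ^ (-(d : ℝ) / 2) * Real.exp (-(1 / (8 * θ)) * ‖z‖ ^ 2))) with hg
  have h0 : Integrable (fun z : Ed d => Real.exp (-(1 / (8 * θ)) * ‖z‖ ^ 2)) :=
    ed_gauss_integrable d (by positivity)
  have hgint : Integrable (fun y : Ed d => g (x - y)) :=
    (((h0.const_mul _).const_mul _).const_mul _).comp_sub_left x
  have hptbd : ∀ y, ‖heatKernel d θ (x - y) * (f x - f y)‖ ≤ g (x - y) := fun y => by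
    rw [Real.norm_eq_abs, abs_mul, abs_of_nonneg (heatKernel_nonneg hθ _)]
    calc heatKernel d θ (x - y) * |f x - f y|
        ≤ heatKernel d θ (x - y) * (L * ‖x - y‖ ^ σ) :=
          mul_le_mul_of_nonneg_left (hHol x y) (heatKernel_nonneg hθ _)
      _ = L * (heatKernel d θ (x - y) * ‖x - y‖ ^ σ) := by ring
      _ ≤ g (x - y) := by
          rw [hg]
          exact mul_le_mul_of_nonneg_left (heatKernel_mul_rpow_le hθ hσ0 hσ1 _) hL
  have hc : (4*π*θ) ^ (-(d:ℝ)/2) * (8*π*θ) ^ ((d:ℝ)/2) = 2 ^ ((d:ℝ)/2) := by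
    have h8 : (8*π*θ : ℝ) = 2 * (4*π*θ) := by ring
    rw [h8, Real.mul_rpow (by norm_num) h4.le, ← mul_assoc,
      mul_comm ((4*π*θ) ^ (-(d:ℝ)/2)) ((2:ℝ) ^ ((d:ℝ)/2)), mul_assoc,
      ← Real.rpow_add h4, neg_div, neg_add_cancel, Real.rpow_zero, mul_one]
  calc |∫ y, heatKernel d θ (x - y) * (f x - f y)| ≤ ∫ y, g (x - y) := by
        rw [← Real.norm_eq_abs]
        exact norm_integral_le_of_norm_le hgint (Filter.Eventually.of_forall hptbd)
    _ = ∫ z, g z := integral_sub_left_eq_self g volume x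
    _ = L * (16 * θ ^ (σ / 2) * ((4*π*θ) ^ (-(d:ℝ)/2) * ∫ z : Ed d,
          Real.exp (-(1 / (8 * θ)) * ‖z‖ ^ 2))) := by
        rw [hg]
        rw [integral_const_mul, integral_const_mul, integral_const_mul]
    _ = L * (16 * θ ^ (σ / 2) * ((4*π*θ) ^ (-(d:ℝ)/2) * (8*π*θ) ^ ((d:ℝ)/2))) := by
        rw [ed_gauss_integral d (by positivity : (0:ℝ) < 1 / (8*θ))]
        congr 3
        field_simp
    _ = L * (16 * 2 ^ ((d:ℝ)/2)) * θ ^ (σ / 2) := by rw [hc]; ring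

lemma opt_real {r σ A B M : ℝ} (hr : 0 < r) (hσ : 0 < σ) (hA : 0 ≤ A) (hB : 0 < B)
    (hAB : A ≤ B)
    (h : ∀ θ ∈ Set.Ioc (0:ℝ) 1, M ≤ B * θ ^ (σ/2) + θ ^ (-(r/2)) * A) :
    M ≤ 2 * A ^ (σ/(r+σ)) * B ^ (r/(r+σ)) := by
  have hrσ : 0 < r + σ := by linarith
  rcases eq_or_lt_of_le hA with hA0 | hA0
  · have hM0 : M ≤ 0 := by
      by_contra hM
      push_neg at hM
      have hq : 0 < M / (2*B) := by positivity
      set θ := min 1 ((M / (2*B)) ^ (2/σ)) with hθdef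
      have hθpos : 0 < θ := lt_min one_pos (Real.rpow_pos_of_pos hq _)
      have hθ1 : θ ≤ 1 := min_le_left _ _
      have hkey := h θ ⟨hθpos, hθ1⟩
      have h1 : θ ^ (σ/2) ≤ M / (2*B) := by
        calc θ ^ (σ/2) ≤ ((M / (2*B)) ^ (2/σ)) ^ (σ/2) :=
              Real.rpow_le_rpow hθpos.le (min_le_right _ _) (by positivity)
          _ = M / (2*B) := by
              rw [← Real.rpow_mul hq.le]
              rw [show (2/σ) * (σ/2) = 1 by field_simp, Real.rpow_one]
      rw [← hA0, mul_zero, add_zero] at hkey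
      have h2 : B * θ ^ (σ/2) ≤ M / 2 := by
        calc B * θ ^ (σ/2) ≤ B * (M / (2*B)) := mul_le_mul_of_nonneg_left h1 hB.le
          _ = M / 2 := by field_simp
      linarith
    calc M ≤ 0 := hM0
      _ ≤ 2 * A ^ (σ/(r+σ)) * B ^ (r/(r+σ)) := by positivity
  · have hq : 0 < A / B := by positivity
    have hq1 : A / B ≤ 1 := (div_le_one hB).2 hAB
    set θ := (A / B) ^ (2/(r+σ)) with hθdef
    have hθpos : 0 < θ := Real.rpow_pos_of_pos hq _
    have hθ1 : θ ≤ 1 := Real.rpow_le_one hq.le hq1 (by positivity)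
    have hkey := h θ ⟨hθpos, hθ1⟩
    have e1 : θ ^ (σ/2) = (A/B) ^ (σ/(r+σ)) := by
      rw [← Real.rpow_mul hq.le]
      congr 1
      field_simp
    have e2 : θ ^ (-(r/2)) = (A/B) ^ (-(r/(r+σ))) := by
      rw [← Real.rpow_mul hq.le]
      congr 1
      field_simp
    have hab : σ/(r+σ) = 1 - r/(r+σ) := by field_simp; ring
    have hba : r/(r+σ) = 1 - σ/(r+σ) := by field_simp; ring
    have f1 : B * (A/B) ^ (σ/(r+σ)) = A ^ (σ/(r+σ)) * B ^ (r/(r+σ)) := by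
      rw [Real.div_rpow hA0.le hB.le, hba, Real.rpow_sub hB, Real.rpow_one]
      field_simp
    have f2 : (A/B) ^ (-(r/(r+σ))) * A = A ^ (σ/(r+σ)) * B ^ (r/(r+σ)) := by
      rw [Real.rpow_neg hq.le, Real.div_rpow hA0.le hB.le, hab, Real.rpow_sub hA0,
        Real.rpow_one]
      have hApow : A ^ (r/(r+σ)) ≠ 0 := (Real.rpow_pos_of_pos hA0 _).ne'
      field_simp
    rw [e1, e2, f1, f2] at hkey
    linarith

/-- Interpolation inequality
`‖f‖_∞ ≤ C N_r(f)^{σ/(r+σ)} ‖f‖_{C^σ}^{r/(r+σ)}` for bounded `σ`-Hölder `f`. -/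
theorem sup_norm_interpolation_besov_holder
    (d : ℕ) (hd : 1 ≤ d) (r σ : ℝ) (hr : 0 < r) (hσ : σ ∈ Set.Ioo (0 : ℝ) 1) :
    ∃ C : ℝ, 0 < C ∧
      ∀ f : Ed d → ℝ, holderNormS d σ f < ⊤ →
        (⨆ x : Ed d, (‖f x‖₊ : ℝ≥0∞)) ≤
          ENNReal.ofReal C * besovNormS d r f ^ (σ / (r + σ)) *
            holderNormS d σ f ^ (r / (r + σ)) := by
  obtain ⟨hσ0, hσ1⟩ := hσ
  have hc0 : (0:ℝ) < 2 ^ ((d:ℝ)/2) := Real.rpow_pos_of_pos (by norm_num) _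
  set K : ℝ := 16 * 2 ^ ((d:ℝ)/2) + 1 with hK
  have hK1 : 1 ≤ K := by rw [hK]; nlinarith
  refine ⟨2 * K, by nlinarith, ?_⟩
  intro f hH
  set H := holderNormS d σ f with hHdef
  set N := besovNormS d r f with hNdef
  set Msup := ⨆ x : Ed d, (‖f x‖₊ : ℝ≥0∞) with hMdef
  have hMH : Msup ≤ H := by rw [hHdef, holderNormS]; exact self_le_add_right _ _
  have hHne : H ≠ ⊤ := hH.ne
  have hMne : Msup ≠ ⊤ := (lt_of_le_of_lt hMH hH).ne
  set L := H.toReal with hLdef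
  have hL0 : 0 ≤ L := ENNReal.toReal_nonneg
  set M' := Msup.toReal with hM'def
  have hM'0 : 0 ≤ M' := ENNReal.toReal_nonneg
  have hM'bd : ∀ x, |f x| ≤ M' := by
    intro x
    have h1 : (‖f x‖₊ : ℝ≥0∞) ≤ Msup := le_iSup (fun x : Ed d => (‖f x‖₊ : ℝ≥0∞)) x
    have h2 := ENNReal.toReal_mono hMne h1
    simpa [Real.norm_eq_abs] using h2
  have hM'L : M' ≤ L := ENNReal.toReal_mono hHne hMH
  -- Hölder bound
  have hHol : ∀ x y, |f x - f y| ≤ L * ‖x - y‖ ^ σ := by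
    intro x y
    rcases eq_or_ne x y with rfl | hxy
    · simp only [sub_self, abs_zero, norm_zero]
      rw [Real.zero_rpow hσ0.ne', mul_zero]
    · have hd0 : 0 < ‖x - y‖ := by rw [norm_pos_iff]; exact sub_ne_zero.2 hxy
      have hp : 0 < ‖x - y‖ ^ σ := Real.rpow_pos_of_pos hd0 _
      have h1 : ENNReal.ofReal (|f x - f y| / ‖x - y‖ ^ σ) ≤ H := by
        rw [hHdef, holderNormS]
        refine le_trans ?_ (le_add_self)
        apply le_iSup_of_le x
        apply le_iSup_of_le y
        exact le_iSup_of_le hxy le_rfl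
      have h2 : |f x - f y| / ‖x - y‖ ^ σ ≤ L :=
        (ENNReal.ofReal_le_iff_le_toReal hHne).1 h1
      calc |f x - f y| = (|f x - f y| / ‖x - y‖ ^ σ) * ‖x - y‖ ^ σ := by field_simp
        _ ≤ L * ‖x - y‖ ^ σ := mul_le_mul_of_nonneg_right h2 hp.le
  -- continuity
  have hhold : HolderWith L.toNNReal σ.toNNReal f := by
    intro x y
    rw [edist_dist, edist_dist, Real.coe_toNNReal σ hσ0.le]
    calc ENNReal.ofReal (dist (f x) (f y)) ≤ ENNReal.ofReal (L * dist x y ^ σ) := by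
          apply ENNReal.ofReal_le_ofReal
          rw [Real.dist_eq, dist_eq_norm]
          exact hHol x y
      _ = ENNReal.ofReal L * ENNReal.ofReal (dist x y ^ σ) := ENNReal.ofReal_mul hL0
      _ = ↑L.toNNReal * ENNReal.ofReal (dist x y) ^ σ := by
          rw [ENNReal.ofReal_rpow_of_nonneg dist_nonneg hσ0.le]; rfl
  have hfc : Continuous f := hhold.continuous (Real.toNNReal_pos.2 hσ0)
  -- besov norm is at most M'
  have hNM : N ≤ ENNReal.ofReal M' := by
    rw [hNdef, besovNormS]
    refine iSup₂_le fun θ hθ => ?_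
    have hsup : eLpNorm (fun x => ∫ y, heatKernel d θ (x - y) * f y) ⊤ volume
        ≤ ENNReal.ofReal M' := by
      rw [eLpNorm_exponent_top]
      exact eLpNormEssSup_le_of_ae_bound (C := M') (Filter.Eventually.of_forall fun x => by
        rw [Real.norm_eq_abs]; exact conv_bound hθ.1 hM'bd x)
    calc ENNReal.ofReal (θ ^ (r/2)) *
          eLpNorm (fun x => ∫ y, heatKernel d θ (x - y) * f y) ⊤ volume
        ≤ 1 * ENNReal.ofReal M' := by
          exact mul_le_mul' (ENNReal.ofReal_le_one.2
            (Real.rpow_le_one hθ.1.le hθ.2 (by positivity))) hsup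
      _ = ENNReal.ofReal M' := one_mul _
  have hNne : N ≠ ⊤ := (lt_of_le_of_lt hNM ENNReal.ofReal_lt_top).ne
  set A := N.toReal with hAdef
  have hA0 : 0 ≤ A := ENNReal.toReal_nonneg
  have hAM : A ≤ M' := by
    have h2 := ENNReal.toReal_mono ENNReal.ofReal_ne_top hNM
    rwa [ENNReal.toReal_ofReal hM'0] at h2
  -- trivial case : H = 0
  rcases eq_or_ne H 0 with hH0 | hH0
  · have hM0 : Msup = 0 := le_antisymm (hH0 ▸ hMH) zero_le
    rw [hM0]
    exact zero_le
  -- main case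
  have hLpos : 0 < L := ENNReal.toReal_pos hH0 hHne
  set B := K * L with hBdef
  have hB0 : 0 < B := mul_pos (lt_of_lt_of_le one_pos hK1) hLpos
  have hAB : A ≤ B := by nlinarith
  have hθx : ∀ θ ∈ Set.Ioc (0:ℝ) 1, ∀ x : Ed d,
      |f x| ≤ B * θ ^ (σ/2) + θ ^ (-(r/2)) * A := by
    rintro θ ⟨hθ0, hθ1⟩
    set D := B * θ ^ (σ/2) + θ ^ (-(r/2)) * A with hD
    have hae : ∀ᵐ x : Ed d ∂volume, |f x| ≤ D := by
      have hle : ENNReal.ofReal (θ ^ (r/2)) *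
          eLpNorm (fun x => ∫ y, heatKernel d θ (x - y) * f y) ⊤ volume ≤ N := by
        rw [hNdef, besovNormS]
        exact le_iSup₂_of_le θ ⟨hθ0, hθ1⟩ le_rfl
      have haeP : ∀ᵐ x : Ed d ∂volume, (‖(∫ y, heatKernel d θ (x - y) * f y)‖₊ : ℝ≥0∞)
          ≤ eLpNorm (fun x => ∫ y, heatKernel d θ (x - y) * f y) ⊤ volume := by
        rw [eLpNorm_exponent_top]
        exact ae_le_eLpNormEssSup
      filter_upwards [haeP] with x hx
      have h1 : ENNReal.ofReal (θ ^ (r/2) * |∫ y, heatKernel d θ (x - y) * f y|) ≤ N := by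
        rw [ENNReal.ofReal_mul (Real.rpow_nonneg hθ0.le _)]
        refine le_trans (mul_le_mul' le_rfl ?_) hle
        rw [← Real.norm_eq_abs, ofReal_norm]
        exact hx
      have h2 : θ ^ (r/2) * |∫ y, heatKernel d θ (x - y) * f y| ≤ A :=
        (ENNReal.ofReal_le_iff_le_toReal hNne).1 h1
      have hpow : 0 < θ ^ (r/2) := Real.rpow_pos_of_pos hθ0 _
      have hPbd : |∫ y, heatKernel d θ (x - y) * f y| ≤ θ ^ (-(r/2)) * A := by
        rw [Real.rpow_neg hθ0.le]
        calc |∫ y, heatKernel d θ (x - y) * f y|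
            = (θ ^ (r/2))⁻¹ * (θ ^ (r/2) * |∫ y, heatKernel d θ (x - y) * f y|) := by
              field_simp
          _ ≤ (θ ^ (r/2))⁻¹ * A := mul_le_mul_of_nonneg_left h2 (inv_nonneg.2 hpow.le)
      have herr := conv_error hθ0 hσ0 hσ1 hL0 hfc hM'bd hHol x
      have hBK : L * (16 * 2 ^ ((d:ℝ)/2)) ≤ B := by rw [hBdef, hK]; nlinarith
      have hθσ : 0 ≤ θ ^ (σ/2) := (Real.rpow_pos_of_pos hθ0 _).le
      calc |f x| = |(f x - ∫ y, heatKernel d θ (x - y) * f y)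
            + ∫ y, heatKernel d θ (x - y) * f y| := by ring_nf
        _ ≤ |f x - ∫ y, heatKernel d θ (x - y) * f y|
            + |∫ y, heatKernel d θ (x - y) * f y| := abs_add_le _ _
        _ ≤ L * (16 * 2 ^ ((d:ℝ)/2)) * θ ^ (σ/2) + θ ^ (-(r/2)) * A := add_le_add herr hPbd
        _ ≤ D := by
            rw [hD]
            exact add_le_add (mul_le_mul_of_nonneg_right hBK hθσ) le_rfl
    intro x
    by_contra hcon
    push_neg at hcon
    have hopen : IsOpen {x : Ed d | D < |f x|} :=
      isOpen_lt continuous_const (continuous_abs.comp hfc)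
    have hne : ({x : Ed d | D < |f x|}).Nonempty := ⟨x, hcon⟩
    have hpos := hopen.measure_pos (volume : Measure (Ed d)) hne
    have hzero : volume {x : Ed d | D < |f x|} = 0 := by
      have h3 := ae_iff.1 hae
      convert h3 using 2
      simp [not_le]
    rw [hzero] at hpos
    exact lt_irrefl _ hpos
  have hfinal : ∀ x : Ed d, |f x| ≤ 2 * A ^ (σ/(r+σ)) * B ^ (r/(r+σ)) :=
    fun x => opt_real hr hσ0 hA0 hB0 hAB (fun θ hθ => hθx θ hθ x)
  have hbb : r/(r+σ) ≤ 1 := by rw [div_le_one (by linarith)]; linarith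
  have hBb : B ^ (r/(r+σ)) ≤ K * L ^ (r/(r+σ)) := by
    rw [hBdef, Real.mul_rpow (by linarith) hL0]
    refine mul_le_mul_of_nonneg_right ?_ (Real.rpow_nonneg hL0 _)
    calc K ^ (r/(r+σ)) ≤ K ^ (1:ℝ) := Real.rpow_le_rpow_of_exponent_le hK1 hbb
      _ = K := Real.rpow_one K
  have hD2 : ∀ x : Ed d, |f x| ≤ (2*K) * A ^ (σ/(r+σ)) * L ^ (r/(r+σ)) := by
    intro x
    refine le_trans (hfinal x) ?_
    have hAa : 0 ≤ A ^ (σ/(r+σ)) := Real.rpow_nonneg hA0 _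
    calc 2 * A ^ (σ/(r+σ)) * B ^ (r/(r+σ)) ≤ 2 * A ^ (σ/(r+σ)) * (K * L ^ (r/(r+σ))) := by
          apply mul_le_mul_of_nonneg_left hBb
          positivity
      _ = (2*K) * A ^ (σ/(r+σ)) * L ^ (r/(r+σ)) := by ring
  calc Msup ≤ ENNReal.ofReal ((2*K) * A ^ (σ/(r+σ)) * L ^ (r/(r+σ))) := by
        refine iSup_le fun x => ?_
        rw [show (‖f x‖₊ : ℝ≥0∞) = ENNReal.ofReal |f x| from by
          rw [← enorm_eq_nnnorm, ← ofReal_norm, Real.norm_eq_abs]]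
        exact ENNReal.ofReal_le_ofReal (hD2 x)
    _ = ENNReal.ofReal (2*K) * N ^ (σ/(r+σ)) * H ^ (r/(r+σ)) := by
        rw [ENNReal.ofReal_mul (by positivity : (0:ℝ) ≤ (2*K) * A ^ (σ/(r+σ))),
          ENNReal.ofReal_mul (by nlinarith : (0:ℝ) ≤ 2*K),
          ← ENNReal.ofReal_rpow_of_nonneg hA0 (by positivity),
          ← ENNReal.ofReal_rpow_of_nonneg hL0 (by positivity),
          hAdef, hLdef, ENNReal.ofReal_toReal hNne, ENNReal.ofReal_toReal hHne]


end
end
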